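/- With G_k, H_k as defined, H_k(λ,μ) = 2^{k-1}[U_{k-1}((-λ-μ)/4) + μ U_{k-2}((-λ-μ)/4)] for all k ≥ 1. -/

import Mathlib

/-- Shifted Chebyshev polynomials of the second kind: `chebUs k = U_{k-1}`,
so `chebUs 0 = U_{-1} = 0`, `chebUs 1 = U_0 = 1`. -/
noncomputable def chebUs : ℕ → ℂ → ℂ
  | 0, _ => 0
  | 1, _ => 1
  | (k + 2), x => 2 * x * chebUs (k + 1) x - chebUs k x

/-- The pair `(G_k, H_k)` defined by `G_1 = μ - λ`, `H_1 = 1`,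
`G_{k+1} = (-λ-μ)G_k - 4H_k`, `H_{k+1} = G_k`.  Index `0` is a dummy value. -/
noncomputable def GH (l m : ℂ) : ℕ → ℂ × ℂ
  | 0 => (0, 0)
  | 1 => (m - l, 1)
  | (k + 2) => ((-l - m) * (GH l m (k + 1)).1 - 4 * (GH l m (k + 1)).2,
      (GH l m (k + 1)).1)

lemma GH_formula (l m : ℂ) (k : ℕ) (hk : 1 ≤ k) :
    (GH l m k).1 = 2 ^ k * (chebUs (k + 1) ((-l - m) / 4)
      + m * chebUs k ((-l - m) / 4)) ∧
    (GH l m k).2 = 2 ^ (k - 1) * (chebUs k ((-l - m) / 4)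
      + m * chebUs (k - 1) ((-l - m) / 4)) := by
  set x : ℂ := (-l - m) / 4 with hx
  have h4 : (-l - m) = 4 * x := by rw [hx]; ring
  induction k with
  | zero => omega
  | succ n ih =>
    rcases Nat.eq_or_lt_of_le hk with h1 | h1
    · -- n + 1 = 1
      have hn : n = 0 := by omega
      subst hn
      simp only [GH, chebUs, pow_one, pow_zero, Nat.sub_self]
      constructor
      · linear_combination h4
      · simp [chebUs]
    · -- n ≥ 1
      have hn : 1 ≤ n := by omega
      obtain ⟨hG, hH⟩ := ih hn
      obtain ⟨p, hp⟩ : ∃ p, n = p + 1 := ⟨n - 1, by omega⟩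
      subst hp
      have e1 : GH l m (p + 1 + 1) =
          ((-l - m) * (GH l m (p + 1)).1 - 4 * (GH l m (p + 1)).2,
            (GH l m (p + 1)).1) := rfl
      constructor
      · rw [e1]
        simp only [hG, hH, h4]
        have e2 : chebUs (p + 1 + 1 + 1) x = 2 * x * chebUs (p + 1 + 1) x - chebUs (p + 1) x := rfl
        have e3 : chebUs (p + 1 + 1) x = 2 * x * chebUs (p + 1) x - chebUs p x := rfl
        simp only [Nat.add_sub_cancel] at *
        rw [e2, e3]
        ring
      · rw [e1]
        simp only [hG]
        simp only [Nat.add_sub_cancel]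

theorem H_formula (l m : ℂ) (k : ℕ) (hk : 1 ≤ k) :
    (GH l m k).2 = 2 ^ (k - 1) * (chebUs k ((-l - m) / 4)
      + m * chebUs (k - 1) ((-l - m) / 4)) := by
  exact (GH_formula l m k hk).2
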